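/- Let o, m be points of the Euclidean plane E, let r > 0, and let S be a set of points contained in the sphere Metric.sphere o r with at least three elements. If the point reflection about m maps S onto itself ((Equiv.pointReflection m) '' S = S), then m = o. -/

import Mathlib

noncomputable abbrev E : Type := EuclideanSpace ℝ (Fin 2)

/-- If a set of at least three points on a circle is mapped onto itself by the point
reflection about `m`, then `m` is the center of the circle. -/
theorem pointReflection_fixed_point_eq_center
    (o m : E) (r : ℝ) (hr : 0 < r) (S : Set E)
    (hS : S ⊆ Metric.sphere o r) (hcard : 3 ≤ S.encard)
    (hsym : (Equiv.pointReflection m) '' S = S) :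
    m = o := by
  by_contra hmo
  set o' : E := Equiv.pointReflection m o with ho'
  have ho'ne : o' ≠ o := by
    intro h
    apply hmo
    have h' : (m - o) + m = o := by
      simpa [ho', Equiv.pointReflection_apply, vsub_eq_sub, vadd_eq_add] using h
    have h2 : (2 : ℝ) • (m - o) = 0 := by
      rw [two_smul]
      calc (m - o) + (m - o) = ((m - o) + m) - o := by abel
        _ = 0 := by rw [h']; exact sub_self o
    have := (smul_eq_zero.mp h2).resolve_left (by norm_num)
    exact sub_eq_zero.mp this
  -- every point of S is equidistant from o and o'
  have hperp : ∀ x ∈ S, x ∈ AffineSubspace.perpBisector o o' := by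
    intro x hx
    rw [AffineSubspace.mem_perpBisector_iff_dist_eq]
    have h1 : dist x o = r := hS hx
    have hRx : Equiv.pointReflection m x ∈ S := by
      rw [← hsym]; exact Set.mem_image_of_mem _ hx
    have h2 : dist (Equiv.pointReflection m x) o = r := hS hRx
    have h3 : dist (Equiv.pointReflection m x) o = dist x o' := by
      simp only [ho', Equiv.pointReflection_apply, vsub_eq_sub, vadd_eq_add, dist_eq_norm]
      rw [← norm_neg (x - (m - o + m))]
      congr 1
      abel
    rw [h1, ← h3, h2]
  -- hence S is collinear
  have hcol : Collinear ℝ S := by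
    have hsub : S ⊆ (AffineSubspace.perpBisector o o' : Set E) := hperp
    have hdir : Module.finrank ℝ (AffineSubspace.perpBisector o o').direction ≤ 1 := by
      rw [AffineSubspace.direction_perpBisector]
      have hv : o' -ᵥ o ≠ 0 := by simpa [vsub_eq_sub, sub_eq_zero] using ho'ne
      have h1 : Module.finrank ℝ (ℝ ∙ (o' -ᵥ o)) = 1 := finrank_span_singleton hv
      have h2 := Submodule.finrank_add_finrank_orthogonal (K := (ℝ ∙ (o' -ᵥ o) : Submodule ℝ E))
      have hE : Module.finrank ℝ E = 2 := finrank_euclideanSpace_fin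
      omega
    have hle := vectorSpan_mono ℝ hsub
    rw [← AffineSubspace.direction_eq_vectorSpan] at hle
    rw [collinear_iff_finrank_le_one]
    exact le_trans (Submodule.finrank_mono hle) hdir
  -- get three distinct points of S
  obtain ⟨a, b, ha, hb, hab⟩ := Set.one_lt_encard_iff.mp (lt_of_lt_of_le (by norm_num) hcard)
  have h2 : 0 < (S \ {a, b}).encard := by
    have h1 : (S \ {a}).encard = S.encard - 1 := Set.encard_diff_singleton_of_mem ha
    have h2' : ((S \ {a}) \ {b}).encard = (S \ {a}).encard - 1 :=
      Set.encard_diff_singleton_of_mem ⟨hb, by simpa using hab.symm⟩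
    have heq : (S \ {a}) \ {b} = S \ {a, b} := by ext x; simp; tauto
    rw [heq] at h2'
    rw [h2', h1, tsub_pos_iff_lt, lt_tsub_iff_right]
    exact lt_of_lt_of_le (by norm_num) hcard
  obtain ⟨c, hc⟩ := Set.encard_pos.mp h2
  have hcS : c ∈ S := hc.1
  have hac : a ≠ c := fun h => hc.2 (by simp [h])
  have hbc : b ≠ c := fun h => hc.2 (by simp [h])
  -- cospherical, so three distinct points are affinely independent, contradiction
  have hcos : EuclideanGeometry.Cospherical ({a, b, c} : Set E) := by
    refine ⟨o, r, ?_⟩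
    rintro p (rfl | rfl | rfl)
    exacts [hS ha, hS hb, hS hcS]
  have hai := hcos.affineIndependent_of_ne hab hac hbc
  rw [affineIndependent_iff_not_collinear_set] at hai
  exact hai (hcol.subset (by
    rintro p (rfl | rfl | rfl)
    exacts [ha, hb, hcS]))
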